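/- Let f : ℝ^n → ℝ be twice continuously differentiable, w⋆ a minimum with ∇f(w⋆) = 0 and positive definite Hessian H = ∇²f(w⋆) with eigenvalues μ₁,…,μ_n, and let α > 0, ε > 0, β ∈ (0,1). Consider the RMSProp iteration v_{t+1} = β v_t + (1−β)∇f(w_t)², w_{t+1} = w_t − α ∇f(w_t)/√(v_{t+1} + ε²) (componentwise). The Jacobian of this map at the fixed point (0, w⋆) is block diagonal with blocks βI and I − (α/ε)H, so its eigenvalues are β (n-fold) and 1 − (α/ε)μ_i for i = 1,…,n. If max_i μ_i < 2ε/α, then the spectral radius of this Jacobian is strictly less than 1 and RMSProp converges locally with exponential rate to (0, w⋆). -/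

import Mathlib

open Polynomial

/-- The gradient of `f : ℝ^n → ℝ`, taken componentwise via partial derivatives. -/
noncomputable def grad {n : ℕ} (f : (Fin n → ℝ) → ℝ) (w : Fin n → ℝ) : Fin n → ℝ :=
  fun i => fderiv ℝ f w (Pi.single i 1)

/-- The Hessian matrix of `f : ℝ^n → ℝ` at `w`. -/
noncomputable def hess {n : ℕ} (f : (Fin n → ℝ) → ℝ) (w : Fin n → ℝ) :
    Matrix (Fin n) (Fin n) ℝ :=
  Matrix.of fun i j => fderiv ℝ (fun u => fderiv ℝ f u (Pi.single j 1)) w (Pi.single i 1)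

/-- The RMSProp map on states `(v, w)`:
`v⁺ = βv + (1−β)g(w)²`, `w⁺ = w − α g(w)/√(v⁺ + ε²)` (componentwise). -/
noncomputable def rmsProp {n : ℕ} (β α ε : ℝ) (g : (Fin n → ℝ) → (Fin n → ℝ))
    (x : (Fin n → ℝ) × (Fin n → ℝ)) : (Fin n → ℝ) × (Fin n → ℝ) :=
  let v' := β • x.1 + (1 - β) • (g x.2 * g x.2)
  (v', x.2 - α • (g x.2 / (fun i => Real.sqrt (v' i + ε ^ 2))))

open Matrix Polynomial

lemma eval_charpoly' {m : Type*} [Fintype m] [DecidableEq m] {R : Type*} [CommRing R]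
    (M : Matrix m m R) (x : R) :
    M.charpoly.eval x = (Matrix.diagonal (fun _ => x) - M).det := by
  rw [Matrix.charpoly, ← Polynomial.coe_evalRingHom, RingHom.map_det]
  congr 1
  ext i j
  by_cases h : i = j <;> simp [Matrix.charmatrix_apply, Matrix.diagonal_apply, h]


section
variable {n : ℕ} {f : (Fin n → ℝ) → ℝ}

lemma hasFDerivAt_fderiv (hf : ContDiff ℝ 2 f) (w : Fin n → ℝ) :
    HasFDerivAt (fderiv ℝ f) (fderiv ℝ (fderiv ℝ f) w) w :=
  (((hf.fderiv_right (m := 1) (by norm_num)).differentiable one_ne_zero) w).hasFDerivAt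

lemma contDiff_grad (hf : ContDiff ℝ 2 f) : ContDiff ℝ 1 (grad f) := by
  apply contDiff_pi.2
  intro i
  exact (hf.fderiv_right (by norm_num)).clm_apply contDiff_const

lemma hess_apply (hf : ContDiff ℝ 2 f) (w : Fin n → ℝ) (i j : Fin n) :
    hess f w i j = fderiv ℝ (fderiv ℝ f) w (Pi.single i 1) (Pi.single j 1) := by
  have h2 := (hasFDerivAt_fderiv hf w).clm_apply
    (hasFDerivAt_const (Pi.single j (1:ℝ)) w)
  rw [hess]
  simp [h2.fderiv]

lemma pi_decomp (p : Fin n → ℝ) : p = ∑ k, p k • (Pi.single k (1:ℝ) : Fin n → ℝ) := by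
  ext j
  simp [Pi.single_apply, Finset.sum_ite_eq', mul_comm]

lemma hasFDerivAt_grad (hf : ContDiff ℝ 2 f) (w : Fin n → ℝ) :
    HasFDerivAt (grad f)
      (LinearMap.toContinuousLinearMap ((hess f w)ᵀ.mulVecLin)) w := by
  apply hasFDerivAt_pi''
  intro j
  have h2 := (hasFDerivAt_fderiv hf w).clm_apply (hasFDerivAt_const (Pi.single j (1:ℝ)) w)
  have heq : (ContinuousLinearMap.proj j (R := ℝ) (φ := fun _ : Fin n => ℝ)).comp
      (LinearMap.toContinuousLinearMap ((hess f w)ᵀ.mulVecLin)) =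
      ((fderiv ℝ f w).comp (0 : (Fin n → ℝ) →L[ℝ] (Fin n → ℝ)) +
        (fderiv ℝ (fderiv ℝ f) w).flip (Pi.single j 1)) := by
    ext p
    simp only [ContinuousLinearMap.comp_apply, ContinuousLinearMap.proj_apply,
      ContinuousLinearMap.add_apply, ContinuousLinearMap.comp_zero,
      ContinuousLinearMap.zero_apply, zero_add, ContinuousLinearMap.flip_apply,
      LinearMap.coe_toContinuousLinearMap, Matrix.mulVecLin_apply]
    conv_rhs => rw [pi_decomp p]
    rw [map_sum]
    simp only [_root_.map_smul, ContinuousLinearMap.coe_sum', Finset.sum_apply,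
      ContinuousLinearMap.coe_smul', Pi.smul_apply, smul_eq_mul]
    show (∑ k, (hess f w)ᵀ j k * p k) = _
    simp only [Matrix.transpose_apply]
    apply Finset.sum_congr rfl
    intro k _
    rw [hess_apply hf w k j, mul_comm]
  rw [heq]
  exact h2
end




section
variable {n : ℕ} {H : Matrix (Fin n) (Fin n) ℝ} {μ : Fin n → ℝ}

lemma charpoly_smul_one (β : ℝ) :
    (β • (1 : Matrix (Fin n) (Fin n) ℝ)).charpoly = (X - C β) ^ n := by
  apply Polynomial.funext
  intro x
  rw [eval_charpoly']
  have : Matrix.diagonal (fun _ => x) - β • (1 : Matrix (Fin n) (Fin n) ℝ) =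
      Matrix.diagonal (fun _ => x - β) := by
    ext i j
    by_cases h : i = j <;> simp [Matrix.diagonal_apply, Matrix.one_apply, h]
  rw [this, Matrix.det_diagonal]
  simp

lemma det_diag_sub (hchar : H.charpoly = ∏ i, (X - C (μ i))) (x : ℝ) :
    (Matrix.diagonal (fun _ => x) - H).det = ∏ i, (x - μ i) := by
  have := congrArg (Polynomial.eval x) hchar
  rw [eval_charpoly'] at this
  simpa [eval_prod] using this

lemma charpoly_one_sub_smul (hchar : H.charpoly = ∏ i, (X - C (μ i))) {c : ℝ} (hc : c ≠ 0) :
    ((1 : Matrix (Fin n) (Fin n) ℝ) - c • H).charpoly = ∏ i, (X - C (1 - c * μ i)) := by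
  apply Polynomial.funext
  intro x
  rw [eval_charpoly']
  have h1 : Matrix.diagonal (fun _ : Fin n => x) - ((1 : Matrix (Fin n) (Fin n) ℝ) - c • H) =
      (-c) • (Matrix.diagonal (fun _ => (1 - x) / c) - H) := by
    ext i j
    by_cases h : i = j
    · subst h
      simp only [Matrix.sub_apply, Matrix.smul_apply, Matrix.diagonal_apply_eq,
        Matrix.one_apply_eq, smul_eq_mul, neg_smul]
      field_simp
      ring
    · simp [Matrix.diagonal_apply, Matrix.one_apply, h]
  rw [h1, Matrix.det_smul, det_diag_sub hchar, Fintype.card_fin,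
    show ((-c) ^ n : ℝ) = ∏ _i : Fin n, (-c) from by simp [Finset.prod_const],
    ← Finset.prod_mul_distrib]
  simp only [eval_prod, eval_sub, eval_X, eval_C]
  apply Finset.prod_congr rfl
  intro i _
  field_simp
  ring
end




lemma root_of_mem_spectrum {m : Type*} [Fintype m] [DecidableEq m] (A : Matrix m m ℝ)
    (lam : ℂ) (h : lam ∈ spectrum ℂ (A.map (fun x : ℝ => (x : ℂ)))) :
    (A.charpoly.map (algebraMap ℝ ℂ)).eval lam = 0 := by
  have hmap : A.map (fun x : ℝ => (x : ℂ)) = A.map (algebraMap ℝ ℂ) := rfl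
  rw [spectrum.mem_iff] at h
  by_contra hne
  apply h
  rw [Matrix.isUnit_iff_isUnit_det]
  apply isUnit_iff_ne_zero.2
  have h2 : (A.map (algebraMap ℝ ℂ)).charpoly.eval lam =
      (Matrix.diagonal (fun _ => lam) - A.map (algebraMap ℝ ℂ)).det := eval_charpoly' _ _
  rw [Matrix.charpoly_map] at h2
  rw [show (algebraMap ℂ (Matrix m m ℂ)) lam = Matrix.diagonal (fun _ => lam) from by
    ext i j; simp [Matrix.algebraMap_matrix_apply, Matrix.diagonal_apply], hmap, ← h2]
  exact hne

section
variable {n : ℕ}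

lemma sum_sq_mulVec (U : Matrix (Fin n) (Fin n) ℝ) (hU : Uᵀ * U = 1) (u : Fin n → ℝ) :
    ∑ j, (U *ᵥ u) j ^ 2 = ∑ j, u j ^ 2 := by
  have h1 : U *ᵥ u = u ᵥ* Uᵀ := by rw [← Matrix.mulVec_transpose Uᵀ u, Matrix.transpose_transpose]
  have : (U *ᵥ u) ⬝ᵥ (U *ᵥ u) = u ⬝ᵥ u := by
    rw [Matrix.dotProduct_mulVec, h1, Matrix.vecMul_vecMul, hU, Matrix.vecMul_one]
  simpa [dotProduct, pow_two] using this

lemma eig_is_root {M : Matrix (Fin n) (Fin n) ℝ} (hM : M.IsHermitian) (i : Fin n) :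
    (Matrix.diagonal (fun _ => hM.eigenvalues i) - M).det = 0 := by
  rw [← Matrix.exists_mulVec_eq_zero_iff]
  refine ⟨⇑(hM.eigenvectorBasis i), ?_, ?_⟩
  · intro h
    apply hM.eigenvectorBasis.orthonormal.ne_zero i
    ext j
    exact congrFun h j
  · have hv := hM.mulVec_eigenvectorBasis i
    rw [Matrix.sub_mulVec, hv]
    ext j
    simp [Matrix.mulVec_diagonal]

lemma sum_sq_mulVec_le {M : Matrix (Fin n) (Fin n) ℝ} (hM : M.IsHermitian) (r : ℝ)
    (hr : ∀ i, |hM.eigenvalues i| ≤ r) (w : Fin n → ℝ) :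
    ∑ j, (M *ᵥ w) j ^ 2 ≤ r ^ 2 * ∑ j, w j ^ 2 := by
  have hU1 : ((hM.eigenvectorUnitary : Matrix (Fin n) (Fin n) ℝ))ᵀ *
      (hM.eigenvectorUnitary : Matrix (Fin n) (Fin n) ℝ) = 1 := by
    have := (Matrix.mem_unitaryGroup_iff'.mp hM.eigenvectorUnitary.2)
    simpa [Matrix.star_eq_conjTranspose, Matrix.conjTranspose_eq_transpose_of_trivial] using this
  have hU2 : ((hM.eigenvectorUnitary : Matrix (Fin n) (Fin n) ℝ)ᵀ)ᵀ *
      (hM.eigenvectorUnitary : Matrix (Fin n) (Fin n) ℝ)ᵀ = 1 := by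
    rw [Matrix.transpose_transpose]
    have := (Matrix.mem_unitaryGroup_iff.mp hM.eigenvectorUnitary.2)
    simpa [Matrix.star_eq_conjTranspose, Matrix.conjTranspose_eq_transpose_of_trivial] using this
  set U := (hM.eigenvectorUnitary : Matrix (Fin n) (Fin n) ℝ) with hUdef
  have hspec := hM.spectral_theorem
  have hsplit : M *ᵥ w = U *ᵥ ((Matrix.diagonal hM.eigenvalues) *ᵥ (Uᵀ *ᵥ w)) := by
    rw [Matrix.mulVec_mulVec, Matrix.mulVec_mulVec]
    conv_lhs => rw [hspec]
    first
    | rfl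
    | (congr 1)
  rw [hsplit, sum_sq_mulVec U hU1]
  have hz := sum_sq_mulVec Uᵀ hU2 w
  calc ∑ j, ((Matrix.diagonal hM.eigenvalues) *ᵥ (Uᵀ *ᵥ w)) j ^ 2
      = ∑ j, (hM.eigenvalues j)^2 * ((Uᵀ *ᵥ w) j)^2 := by
        apply Finset.sum_congr rfl; intro j _
        rw [Matrix.mulVec_diagonal]; ring
    _ ≤ ∑ j, r^2 * ((Uᵀ *ᵥ w) j)^2 := by
        apply Finset.sum_le_sum; intro j _
        apply mul_le_mul_of_nonneg_right _ (sq_nonneg _)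
        rw [← sq_abs]
        exact pow_le_pow_left₀ (abs_nonneg _) (hr j) 2
    _ = r^2 * ∑ j, w j ^2 := by rw [← Finset.mul_sum, hz]
end


section
variable {n : ℕ} {g : (Fin n → ℝ) → (Fin n → ℝ)} {wstar : Fin n → ℝ}

local notation "E" => Fin n → ℝ

lemma rmsProp_eq (β α ε : ℝ) :
    rmsProp β α ε g = fun x : E × E =>
      (β • x.1 + (1 - β) • (g x.2 * g x.2),
        x.2 - α • (g x.2 / (fun i => Real.sqrt ((β • x.1 + (1 - β) • (g x.2 * g x.2)) i + ε ^ 2)))) :=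
  rfl

lemma rmsProp_fixed (β α ε : ℝ) (hg0 : g wstar = 0) :
    rmsProp β α ε g ((0 : E), wstar) = ((0 : E), wstar) := by
  rw [rmsProp_eq]
  have hz : ((0 : E) / (fun _ : Fin n => Real.sqrt (ε ^ 2))) = 0 := by
    ext i; simp
  simp [hg0, hz]

lemma rmsProp_hasFDerivAt (β α ε : ℝ) (hε : 0 < ε) (G : E →L[ℝ] E)
    (hgd : HasFDerivAt g G wstar) (hg0 : g wstar = 0) :
    HasFDerivAt (rmsProp β α ε g)
      ((β • ContinuousLinearMap.fst ℝ E E).prod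
        (ContinuousLinearMap.snd ℝ E E -
          (α / ε) • (G.comp (ContinuousLinearMap.snd ℝ E E)))) ((0 : E), wstar) := by
  set q : E × E := ((0 : E), wstar) with hq
  have hq2 : g q.2 = 0 := hg0
  have hgpair : HasFDerivAt (fun x : E × E => g x.2) (G.comp (ContinuousLinearMap.snd ℝ E E)) q :=
    hgd.comp q (hasFDerivAt_snd)
  have hVval : ∀ i, (β • q.1 + (1 - β) • (g q.2 * g q.2)) i + ε ^ 2 = ε ^ 2 := by
    intro i; simp [hq2]; exact Or.inr rfl
  -- derivative of the first component
  have hV : HasFDerivAt (fun x : E × E => β • x.1 + (1 - β) • (g x.2 * g x.2))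
      (β • ContinuousLinearMap.fst ℝ E E) q := by
    apply hasFDerivAt_pi'.2
    intro i
    have h1 : HasFDerivAt (fun x : E × E => x.1 i)
        ((ContinuousLinearMap.proj i).comp (ContinuousLinearMap.fst ℝ E E)) q :=
      hasFDerivAt_pi'.1 (hasFDerivAt_fst) i
    have hgi : HasFDerivAt (fun x : E × E => g x.2 i)
        ((ContinuousLinearMap.proj i).comp (G.comp (ContinuousLinearMap.snd ℝ E E))) q :=
      hasFDerivAt_pi'.1 hgpair i
    have h2 := (h1.const_mul β).add ((hgi.mul hgi).const_mul (1 - β))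
    simp only [hq2, hg0, Pi.zero_apply, zero_smul, zero_add, add_zero, smul_zero] at h2
    show HasFDerivAt (fun x : E × E => β * x.1 i + (1 - β) * (g x.2 i * g x.2 i))
      ((ContinuousLinearMap.proj i).comp (β • ContinuousLinearMap.fst ℝ E E)) q
    rw [ContinuousLinearMap.comp_smul]
    exact h2
  -- derivative of the second component
  have hW : HasFDerivAt (fun x : E × E =>
      x.2 - α • (g x.2 / (fun i => Real.sqrt ((β • x.1 + (1 - β) • (g x.2 * g x.2)) i + ε ^ 2))))
      (ContinuousLinearMap.snd ℝ E E -
        (α / ε) • (G.comp (ContinuousLinearMap.snd ℝ E E))) q := by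
    apply hasFDerivAt_pi'.2
    intro i
    have hVi : HasFDerivAt (fun x : E × E => (β • x.1 + (1 - β) • (g x.2 * g x.2)) i)
        ((ContinuousLinearMap.proj i).comp (β • ContinuousLinearMap.fst ℝ E E)) q :=
      hasFDerivAt_pi'.1 hV i
    have hgi : HasFDerivAt (fun x : E × E => g x.2 i)
        ((ContinuousLinearMap.proj i).comp (G.comp (ContinuousLinearMap.snd ℝ E E))) q :=
      hasFDerivAt_pi'.1 hgpair i
    have hplus : HasFDerivAt (fun x : E × E => (β • x.1 + (1 - β) • (g x.2 * g x.2)) i + ε ^ 2)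
        ((ContinuousLinearMap.proj i).comp (β • ContinuousLinearMap.fst ℝ E E)) q :=
      hVi.add_const _
    have hne0 : ((β • q.1 + (1 - β) • (g q.2 * g q.2)) i + ε ^ 2) ≠ 0 := by
      rw [hVval i]; positivity
    have hsqrt := (Real.hasDerivAt_sqrt hne0).comp_hasFDerivAt q hplus
    have hsval : Real.sqrt ((β • q.1 + (1 - β) • (g q.2 * g q.2)) i + ε ^ 2) = ε := by
      rw [hVval i, Real.sqrt_sq hε.le]
    have hsne : Real.sqrt ((β • q.1 + (1 - β) • (g q.2 * g q.2)) i + ε ^ 2) ≠ 0 := by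
      rw [hsval]; exact hε.ne'
    have hinv := (hasDerivAt_inv hsne).comp_hasFDerivAt q hsqrt
    have hdiv0 := hgi.mul hinv
    have hdiv : HasFDerivAt (fun x : E × E =>
        g x.2 i / Real.sqrt ((β • x.1 + (1 - β) • (g x.2 * g x.2)) i + ε ^ 2))
        (g q.2 i • ((-(Real.sqrt ((β • q.1 + (1 - β) • (g q.2 * g q.2)) i + ε ^ 2) ^ 2)⁻¹) •
            ((1 / (2 * Real.sqrt ((β • q.1 + (1 - β) • (g q.2 * g q.2)) i + ε ^ 2))) •
              ((ContinuousLinearMap.proj i).comp (β • ContinuousLinearMap.fst ℝ E E)))) +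
          (Real.sqrt ((β • q.1 + (1 - β) • (g q.2 * g q.2)) i + ε ^ 2))⁻¹ •
            ((ContinuousLinearMap.proj i).comp (G.comp (ContinuousLinearMap.snd ℝ E E)))) q := by
      apply hdiv0.congr_of_eventuallyEq
      filter_upwards with x
      simp [Function.comp, div_eq_mul_inv]
    have h2' : HasFDerivAt (fun x : E × E => x.2 i)
        ((ContinuousLinearMap.proj i).comp (ContinuousLinearMap.snd ℝ E E)) q :=
      hasFDerivAt_pi'.1 (hasFDerivAt_snd) i
    have hfull := h2'.sub (hdiv.const_mul α)
    rw [hsval] at hfull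
    simp only [hq2, hg0, Pi.zero_apply, zero_smul, zero_add] at hfull
    rw [smul_smul, ← div_eq_mul_inv] at hfull
    show HasFDerivAt (fun x : E × E =>
        x.2 i - α * (g x.2 i / Real.sqrt ((β • x.1 + (1 - β) • (g x.2 * g x.2)) i + ε ^ 2)))
      ((ContinuousLinearMap.proj i).comp (ContinuousLinearMap.snd ℝ E E -
        (α / ε) • (G.comp (ContinuousLinearMap.snd ℝ E E)))) q
    rw [ContinuousLinearMap.comp_sub, ContinuousLinearMap.comp_smul]
    exact hfull
  rw [rmsProp_eq]
  exact hV.prodMk hW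
end


section
variable {n : ℕ}
local notation "E" => Fin n → ℝ

noncomputable def enorm2 (v : E) : ℝ := Real.sqrt (∑ i, v i ^ 2)

lemma enorm2_nonneg (v : E) : 0 ≤ enorm2 v := Real.sqrt_nonneg _

lemma enorm2_eq_norm (v : E) : enorm2 v = ‖(WithLp.equiv 2 (Fin n → ℝ)).symm v‖ := by
  rw [enorm2, EuclideanSpace.norm_eq]
  simp [Real.norm_eq_abs, sq_abs]

lemma enorm2_add_le (a b : E) : enorm2 (a + b) ≤ enorm2 a + enorm2 b := by
  rw [enorm2_eq_norm, enorm2_eq_norm, enorm2_eq_norm]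
  have : (WithLp.equiv 2 (Fin n → ℝ)).symm (a + b) =
      (WithLp.equiv 2 (Fin n → ℝ)).symm a + (WithLp.equiv 2 (Fin n → ℝ)).symm b := rfl
  rw [this]
  exact norm_add_le _ _

lemma enorm2_smul (c : ℝ) (v : E) : enorm2 (c • v) = |c| * enorm2 v := by
  rw [enorm2_eq_norm, enorm2_eq_norm]
  have : (WithLp.equiv 2 (Fin n → ℝ)).symm (c • v) =
      c • (WithLp.equiv 2 (Fin n → ℝ)).symm v := rfl
  rw [this, norm_smul, Real.norm_eq_abs]

lemma norm_le_enorm (v : E) : ‖v‖ ≤ enorm2 v := by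
  rcases isEmpty_or_nonempty (Fin n) with h | h
  · simp [enorm2]
    have : v = 0 := Subsingleton.elim _ _
    simp [this]
  apply pi_norm_le_iff_of_nonneg (enorm2_nonneg v) |>.2
  intro i
  rw [Real.norm_eq_abs, ← Real.sqrt_sq_eq_abs]
  apply Real.sqrt_le_sqrt
  exact Finset.single_le_sum (fun j _ => sq_nonneg (v j)) (Finset.mem_univ i)

lemma enorm2_le_sqrt_norm (v : E) : enorm2 v ≤ Real.sqrt n * ‖v‖ := by
  rw [show Real.sqrt n * ‖v‖ = Real.sqrt (n * ‖v‖^2) by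
    rw [Real.sqrt_mul (Nat.cast_nonneg n), Real.sqrt_sq (norm_nonneg v)]]
  apply Real.sqrt_le_sqrt
  calc ∑ i, v i ^ 2 ≤ ∑ _i : Fin n, ‖v‖^2 := by
        apply Finset.sum_le_sum
        intro i _
        rw [← sq_abs, ← Real.norm_eq_abs]
        exact pow_le_pow_left₀ (norm_nonneg _) (norm_le_pi_norm v i) 2
    _ = n * ‖v‖^2 := by simp [Finset.sum_const]
end

section
variable {n : ℕ}
local notation "E" => Fin n → ℝ

noncomputable def npair (p : (Fin n → ℝ) × (Fin n → ℝ)) : ℝ := max (enorm2 p.1) (enorm2 p.2)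

lemma npair_nonneg (p : E × E) : 0 ≤ npair p := le_trans (enorm2_nonneg p.1) (le_max_left _ _)

lemma npair_add_le (a b : E × E) : npair (a + b) ≤ npair a + npair b := by
  apply max_le
  · exact le_trans (enorm2_add_le a.1 b.1)
      (add_le_add (le_max_left _ _) (le_max_left _ _))
  · exact le_trans (enorm2_add_le a.2 b.2)
      (add_le_add (le_max_right _ _) (le_max_right _ _))

lemma norm_le_npair (p : E × E) : ‖p‖ ≤ npair p := by
  rw [Prod.norm_def]
  exact max_le_max (norm_le_enorm p.1) (norm_le_enorm p.2)

lemma npair_le_sqrt_norm (p : E × E) : npair p ≤ Real.sqrt n * ‖p‖ := by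
  rw [Prod.norm_def]
  apply max_le
  · exact le_trans (enorm2_le_sqrt_norm p.1)
      (mul_le_mul_of_nonneg_left (le_max_left _ _) (Real.sqrt_nonneg _))
  · exact le_trans (enorm2_le_sqrt_norm p.2)
      (mul_le_mul_of_nonneg_left (le_max_right _ _) (Real.sqrt_nonneg _))

lemma iterate_conv (Φ : E × E → E × E) (q : E × E) (hfix : Φ q = q)
    (L : (E × E) →L[ℝ] (E × E)) (hd : HasFDerivAt Φ L q)
    (r b : ℝ) (hr0 : 0 ≤ r) (hr1 : r < 1) (hb : 1 ≤ b)
    (hLb : ∀ p : E × E, npair (L p) ≤ r * npair p)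
    (hup : ∀ p : E × E, npair p ≤ b * ‖p‖) :
    ∃ δ > (0:ℝ), ∀ x₀ : E × E, ‖x₀ - q‖ < δ → ∀ t : ℕ,
      ‖Φ^[t] x₀ - q‖ ≤ b * ((1 + r) / 2) ^ t * ‖x₀ - q‖ := by
  set c : ℝ := (1 + r) / 2 with hc
  have hc0 : 0 ≤ c := by positivity
  have hc1 : c < 1 := by rw [hc]; linarith
  have hrc : r < c := by rw [hc]; linarith
  have hη : (0:ℝ) < (c - r) / b := by
    apply div_pos (by linarith) (by linarith)
  have hev := hd.isLittleO.def hη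
  rw [Metric.eventually_nhds_iff] at hev
  obtain ⟨δ₀, hδ₀, hball⟩ := hev
  refine ⟨δ₀ / b, by positivity, ?_⟩
  intro x₀ hx₀ t
  -- key one-step estimate
  have hstep : ∀ x : E × E, npair (x - q) < δ₀ → npair (Φ x - q) ≤ c * npair (x - q) := by
    intro x hx
    have hdist : dist x q < δ₀ :=
      lt_of_le_of_lt (by rw [dist_eq_norm]; exact norm_le_npair _) hx
    have hb2 := hball hdist
    have hsplit : Φ x - q = L (x - q) + (Φ x - Φ q - L (x - q)) := by
      rw [hfix]; abel
    rw [hsplit]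
    calc npair (L (x - q) + (Φ x - Φ q - L (x - q)))
        ≤ npair (L (x - q)) + npair (Φ x - Φ q - L (x - q)) := npair_add_le _ _
      _ ≤ r * npair (x - q) + b * ‖Φ x - Φ q - L (x - q)‖ := add_le_add (hLb _) (hup _)
      _ ≤ r * npair (x - q) + b * ((c - r) / b * ‖x - q‖) := by
          apply add_le_add le_rfl
          exact mul_le_mul_of_nonneg_left hb2 (by linarith)
      _ ≤ r * npair (x - q) + (c - r) * npair (x - q) := by
          apply add_le_add le_rfl
          rw [← mul_assoc, mul_div_cancel₀ _ (by linarith : b ≠ 0)]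
          exact mul_le_mul_of_nonneg_left (norm_le_npair _) (by linarith)
      _ = c * npair (x - q) := by ring
  have hN0 : npair (x₀ - q) < δ₀ := by
    apply lt_of_le_of_lt (hup _)
    calc b * ‖x₀ - q‖ < b * (δ₀ / b) := by
          apply mul_lt_mul_of_pos_left hx₀ (by linarith)
      _ = δ₀ := by field_simp
  have hind : ∀ t : ℕ, npair (Φ^[t] x₀ - q) ≤ c ^ t * npair (x₀ - q) := by
    intro t
    induction t with
    | zero => simp
    | succ t ih =>
      have hlt : npair (Φ^[t] x₀ - q) < δ₀ := by
        apply lt_of_le_of_lt ih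
        calc c ^ t * npair (x₀ - q) ≤ 1 * npair (x₀ - q) := by
              apply mul_le_mul_of_nonneg_right _ (npair_nonneg _)
              exact pow_le_one₀ hc0 hc1.le
          _ = npair (x₀ - q) := one_mul _
          _ < δ₀ := hN0
      rw [Function.iterate_succ_apply']
      calc npair (Φ (Φ^[t] x₀) - q) ≤ c * npair (Φ^[t] x₀ - q) := hstep _ hlt
        _ ≤ c * (c ^ t * npair (x₀ - q)) := mul_le_mul_of_nonneg_left ih hc0
        _ = c ^ (t + 1) * npair (x₀ - q) := by ring
  calc ‖Φ^[t] x₀ - q‖ ≤ npair (Φ^[t] x₀ - q) := norm_le_npair _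
    _ ≤ c ^ t * npair (x₀ - q) := hind t
    _ ≤ c ^ t * (b * ‖x₀ - q‖) := by
        apply mul_le_mul_of_nonneg_left (hup _) (by positivity)
    _ = b * c ^ t * ‖x₀ - q‖ := by ring
end

/-- **RMSProp: Jacobian at the fixed point, its eigenvalues, and local convergence.**
At a minimum `wstar` of `f ∈ C²` with positive definite Hessian `H` having eigenvalues
`μᵢ`, the Jacobian of the RMSProp map at `(0, wstar)` is block diagonal with blocks `βI`
and `I − (α/ε)H`; its eigenvalues are `β` (`n`-fold) and `1 − (α/ε)μᵢ`. If
`μᵢ < 2ε/α` for all `i`, the spectral radius is `< 1` and RMSProp converges locally to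
`(0, wstar)` with exponential rate. -/
theorem stmt14 {n : ℕ} (f : (Fin n → ℝ) → ℝ) (hf : ContDiff ℝ 2 f)
    (wstar : Fin n → ℝ) (hcrit : grad f wstar = 0)
    (μ : Fin n → ℝ) (hpd : (hess f wstar).PosDef) (hμ : ∀ i, 0 < μ i)
    (hchar : (hess f wstar).charpoly = ∏ i, (X - C (μ i)))
    (α ε β : ℝ) (hα : 0 < α) (hε : 0 < ε) (hβ : β ∈ Set.Ioo (0 : ℝ) 1) :
    (∀ p : (Fin n → ℝ) × (Fin n → ℝ),
      fderiv ℝ (rmsProp β α ε (grad f)) (0, wstar) p =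
        (β • p.1, p.2 - (α / ε) • (hess f wstar).mulVec p.2)) ∧
    ((Matrix.fromBlocks (β • (1 : Matrix (Fin n) (Fin n) ℝ)) 0 0
        ((1 : Matrix (Fin n) (Fin n) ℝ) - (α / ε) • hess f wstar)).charpoly =
      (X - C β) ^ n * ∏ i, (X - C (1 - α / ε * μ i))) ∧
    ((∀ i, μ i < 2 * ε / α) →
      (∀ lam ∈ spectrum ℂ
          ((Matrix.fromBlocks (β • (1 : Matrix (Fin n) (Fin n) ℝ)) 0 0
            ((1 : Matrix (Fin n) (Fin n) ℝ) - (α / ε) • hess f wstar)).map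
              (fun x : ℝ => (x : ℂ))),
        ‖lam‖ < 1) ∧
      ∃ δ > (0 : ℝ), ∃ Cc ≥ (0 : ℝ), ∃ c : ℝ, 0 < c ∧ c < 1 ∧
        ∀ x₀ : (Fin n → ℝ) × (Fin n → ℝ), ‖x₀ - (0, wstar)‖ < δ →
          ∀ t : ℕ, ‖(rmsProp β α ε (grad f))^[t] x₀ - (0, wstar)‖ ≤
            Cc * c ^ t * ‖x₀ - (0, wstar)‖) := by
  obtain ⟨hβ0, hβ1⟩ := hβ
  have hsym : (hess f wstar)ᵀ = hess f wstar := by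
    have h1 : (hess f wstar)ᴴ = hess f wstar := hpd.1
    calc (hess f wstar)ᵀ = (hess f wstar)ᴴ := by
          ext i j; simp [Matrix.conjTranspose_apply]
      _ = hess f wstar := h1
  have hcne : (α / ε) ≠ 0 := by positivity
  have hg0 : grad f wstar = 0 := hcrit
  set G : (Fin n → ℝ) →L[ℝ] (Fin n → ℝ) :=
    LinearMap.toContinuousLinearMap ((hess f wstar).mulVecLin) with hGdef
  have hGd : HasFDerivAt (grad f) G wstar := by
    have := hasFDerivAt_grad hf wstar
    rwa [hsym] at this
  have hFD := rmsProp_hasFDerivAt β α ε hε G hGd hg0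
  have happ : ∀ p : (Fin n → ℝ) × (Fin n → ℝ),
      ((β • ContinuousLinearMap.fst ℝ (Fin n → ℝ) (Fin n → ℝ)).prod
        (ContinuousLinearMap.snd ℝ (Fin n → ℝ) (Fin n → ℝ) -
          (α / ε) • (G.comp (ContinuousLinearMap.snd ℝ (Fin n → ℝ) (Fin n → ℝ))))) p =
      (β • p.1, p.2 - (α / ε) • (hess f wstar).mulVec p.2) := by
    intro p
    simp only [ContinuousLinearMap.prod_apply, ContinuousLinearMap.smul_apply,
      ContinuousLinearMap.coe_fst', ContinuousLinearMap.sub_apply, ContinuousLinearMap.coe_snd',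
      ContinuousLinearMap.comp_apply, hGdef, LinearMap.coe_toContinuousLinearMap',
      Matrix.mulVecLin_apply]
  have hfderiv_app : ∀ p : (Fin n → ℝ) × (Fin n → ℝ),
      fderiv ℝ (rmsProp β α ε (grad f)) (0, wstar) p =
        (β • p.1, p.2 - (α / ε) • (hess f wstar).mulVec p.2) := by
    intro p
    rw [hFD.fderiv]
    exact happ p
  have hP : (Matrix.fromBlocks (β • (1 : Matrix (Fin n) (Fin n) ℝ)) 0 0
        ((1 : Matrix (Fin n) (Fin n) ℝ) - (α / ε) • hess f wstar)).charpoly =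
      (X - C β) ^ n * ∏ i, (X - C (1 - α / ε * μ i)) := by
    rw [Matrix.charpoly_fromBlocks_zero₁₂, charpoly_smul_one,
      charpoly_one_sub_smul hchar hcne]
  refine ⟨hfderiv_app, hP, ?_⟩
  intro hμ2
  have hgt0 : ∀ i, 0 < α / ε * μ i := fun i => mul_pos (by positivity) (hμ i)
  have hlt2 : ∀ i, α / ε * μ i < 2 := by
    intro i
    calc α / ε * μ i < α / ε * (2 * ε / α) :=
          mul_lt_mul_of_pos_left (hμ2 i) (by positivity)
      _ = 2 := by field_simp
  constructor
  · -- spectral radius < 1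
    intro lam hlam
    have hroot := root_of_mem_spectrum _ lam hlam
    rw [hP] at hroot
    simp only [Polynomial.map_mul, Polynomial.map_pow, Polynomial.map_sub, Polynomial.map_X,
      Polynomial.map_C, Polynomial.map_prod, eval_mul, eval_pow, eval_sub, eval_X, eval_C,
      eval_prod, Complex.coe_algebraMap] at hroot
    rcases mul_eq_zero.1 hroot with h | h
    · have h2 := pow_eq_zero_iff'.1 h
      rw [sub_eq_zero] at h2
      rw [h2.1, Complex.norm_real, Real.norm_eq_abs, abs_lt]
      constructor <;> linarith
    · obtain ⟨i, -, hi⟩ := Finset.prod_eq_zero_iff.1 h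
      rw [sub_eq_zero] at hi
      rw [hi, Complex.norm_real, Real.norm_eq_abs, abs_lt]
      constructor <;> [linarith [hlt2 i]; linarith [hgt0 i]]
  · -- local exponential convergence
    by_cases hn : n = 0
    · subst hn
      refine ⟨1, one_pos, 0, le_refl 0, 1/2, by norm_num, by norm_num, ?_⟩
      intro x₀ _ t
      have hz : (rmsProp β α ε (grad f))^[t] x₀ - ((0 : Fin 0 → ℝ), wstar) = 0 :=
        Subsingleton.elim _ _
      rw [hz, norm_zero]
      have hz2 : x₀ - ((0 : Fin 0 → ℝ), wstar) = 0 := Subsingleton.elim _ _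
      rw [hz2, norm_zero]
      simp
    · haveI : Nonempty (Fin n) := ⟨⟨0, Nat.pos_of_ne_zero hn⟩⟩
      set M : Matrix (Fin n) (Fin n) ℝ :=
        (1 : Matrix (Fin n) (Fin n) ℝ) - (α / ε) • hess f wstar with hMdef
      have hM : M.IsHermitian := by
        show Mᴴ = M
        rw [hMdef, Matrix.conjTranspose_sub, Matrix.conjTranspose_smul,
          Matrix.conjTranspose_one, show star (α/ε) = α/ε from rfl, hpd.1]
      obtain ⟨rM, hrMd⟩ : ∃ rM : ℝ, rM = Finset.univ.sup' Finset.univ_nonempty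
          (fun i => |1 - α / ε * μ i|) := ⟨_, rfl⟩
      have hle : ∀ i : Fin n, |1 - α / ε * μ i| ≤ rM := by
        intro i
        rw [hrMd]
        exact Finset.le_sup' (fun i => |1 - α / ε * μ i|) (Finset.mem_univ i)
      have hrM0 : 0 ≤ rM := by
        obtain ⟨i0⟩ := (inferInstance : Nonempty (Fin n))
        exact le_trans (abs_nonneg _) (hle i0)
      have hrM1 : rM < 1 := by
        rw [hrMd]
        refine (Finset.sup'_lt_iff Finset.univ_nonempty).2 ?_
        intro i _
        rw [abs_lt]
        constructor <;> [linarith [hlt2 i]; linarith [hgt0 i]]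
      have hcp : M.charpoly = ∏ i, (X - C (1 - α / ε * μ i)) :=
        charpoly_one_sub_smul hchar hcne
      have heig : ∀ j, |hM.eigenvalues j| ≤ rM := by
        intro j
        have h0 := eig_is_root hM j
        rw [det_diag_sub hcp] at h0
        obtain ⟨i, -, hi⟩ := Finset.prod_eq_zero_iff.1 h0
        rw [sub_eq_zero] at hi
        rw [hi]
        exact hle i
      have henb : ∀ w, enorm2 (M *ᵥ w) ≤ rM * enorm2 w := by
        intro w
        rw [show rM * enorm2 w = Real.sqrt (rM^2 * ∑ i, w i ^ 2) by
          rw [Real.sqrt_mul (sq_nonneg rM), Real.sqrt_sq hrM0]; rfl]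
        exact Real.sqrt_le_sqrt (sum_sq_mulVec_le hM rM heig w)
      set r : ℝ := max β rM with hrdef
      have hr0 : 0 ≤ r := le_trans hβ0.le (le_max_left _ _)
      have hr1 : r < 1 := max_lt hβ1 hrM1
      have hLb : ∀ p : (Fin n → ℝ) × (Fin n → ℝ),
          npair (((β • ContinuousLinearMap.fst ℝ (Fin n → ℝ) (Fin n → ℝ)).prod
            (ContinuousLinearMap.snd ℝ (Fin n → ℝ) (Fin n → ℝ) -
              (α / ε) • (G.comp (ContinuousLinearMap.snd ℝ (Fin n → ℝ) (Fin n → ℝ))))) p)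
            ≤ r * npair p := by
        intro p
        rw [happ p]
        have h2 : p.2 - (α / ε) • (hess f wstar).mulVec p.2 = M *ᵥ p.2 := by
          rw [hMdef, Matrix.sub_mulVec, Matrix.one_mulVec, Matrix.smul_mulVec]
        show max (enorm2 (β • p.1)) (enorm2 (p.2 - (α / ε) • (hess f wstar).mulVec p.2))
          ≤ r * npair p
        rw [h2]
        apply max_le
        · rw [enorm2_smul, abs_of_pos hβ0]
          exact mul_le_mul (le_max_left β rM) (le_max_left _ _) (enorm2_nonneg _) hr0
        · exact le_trans (henb p.2)
            (mul_le_mul (le_max_right β rM) (le_max_right _ _) (enorm2_nonneg _) hr0)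
      have hb1 : 1 ≤ Real.sqrt n := by
        rw [show (1:ℝ) = Real.sqrt 1 from (Real.sqrt_one).symm]
        exact Real.sqrt_le_sqrt (by exact_mod_cast Nat.one_le_iff_ne_zero.2 hn)
      obtain ⟨δ, hδ, hconv⟩ := iterate_conv (rmsProp β α ε (grad f)) ((0 : Fin n → ℝ), wstar)
        (rmsProp_fixed β α ε hg0) _ hFD r (Real.sqrt n) hr0 hr1 hb1 hLb npair_le_sqrt_norm
      exact ⟨δ, hδ, Real.sqrt n, Real.sqrt_nonneg n, (1 + r) / 2,
        by linarith, by linarith, hconv⟩
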